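/- arXiv:1902.11059 — 2 statements merged into one kernel-verified Lean document; each statement's English description precedes it below -/
import Mathlib

section
/- For any invertible matrices $A, B \in GL_{d+1}(\mathbb{R})$ and any unit vector $x \in \mathbb{R}^{d+1}$, one has $\left\| \frac{Ax}{\|Ax\|} - \frac{Bx}{\|Bx\|} \right\| \leq \|A^{-1}\| (1 + \|B\| \|B^{-1}\|) \|A - B\|$. -/
open scoped BigOperators

lemma aux_normalize_sub {E : Type*} [NormedAddCommGroup E] [NormedSpace ℝ E]
    {a b : E} (ha : a ≠ 0) (hb : b ≠ 0) :
    ‖‖a‖⁻¹ • a - ‖b‖⁻¹ • b‖ ≤ 2 * ‖a - b‖ / ‖a‖ := by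
  have ha' : (0:ℝ) < ‖a‖ := norm_pos_iff.mpr ha
  have hb' : (0:ℝ) < ‖b‖ := norm_pos_iff.mpr hb
  have key : ‖a‖⁻¹ • a - ‖b‖⁻¹ • b = ‖a‖⁻¹ • (a - b) + (‖a‖⁻¹ - ‖b‖⁻¹) • b := by
    rw [smul_sub, sub_smul]; abel
  have habs : |‖a‖⁻¹ - ‖b‖⁻¹| * ‖b‖ ≤ ‖a‖⁻¹ * ‖a - b‖ := by
    have h1 : |‖b‖ - ‖a‖| ≤ ‖a - b‖ := by
      rw [abs_sub_comm]; exact abs_norm_sub_norm_le a b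
    rw [inv_sub_inv ha'.ne' hb'.ne', abs_div, abs_of_pos (mul_pos ha' hb'),
      div_mul_eq_mul_div, mul_comm ‖a‖ ‖b‖, ← div_div, mul_div_assoc,
      div_self hb'.ne', mul_one, div_eq_inv_mul]
    gcongr
  rw [key]
  calc ‖‖a‖⁻¹ • (a - b) + (‖a‖⁻¹ - ‖b‖⁻¹) • b‖
      ≤ ‖‖a‖⁻¹ • (a - b)‖ + ‖(‖a‖⁻¹ - ‖b‖⁻¹) • b‖ := norm_add_le _ _
    _ = ‖a‖⁻¹ * ‖a - b‖ + |‖a‖⁻¹ - ‖b‖⁻¹| * ‖b‖ := by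
        rw [norm_smul, norm_smul, Real.norm_eq_abs, Real.norm_eq_abs,
          abs_of_pos (inv_pos.mpr ha')]
    _ ≤ ‖a‖⁻¹ * ‖a - b‖ + ‖a‖⁻¹ * ‖a - b‖ := by gcongr
    _ = 2 * ‖a - b‖ / ‖a‖ := by field_simp; ring

lemma aux_main {E : Type*} [NormedAddCommGroup E] [NormedSpace ℝ E] [Nontrivial E]
    (A B : (E →L[ℝ] E)ˣ) (x : E) (hx : ‖x‖ = 1) :
    ‖(‖(A : E →L[ℝ] E) x‖⁻¹ • (A : E →L[ℝ] E) x) -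
      (‖(B : E →L[ℝ] E) x‖⁻¹ • (B : E →L[ℝ] E) x)‖ ≤
    ‖((A⁻¹ : _ˣ) : E →L[ℝ] E)‖ * (1 + ‖(B : E →L[ℝ] E)‖ * ‖((B⁻¹ : _ˣ) : E →L[ℝ] E)‖) *
      ‖(A : E →L[ℝ] E) - (B : E →L[ℝ] E)‖ := by
  set A' : E →L[ℝ] E := (A : E →L[ℝ] E) with hA'
  set B' : E →L[ℝ] E := (B : E →L[ℝ] E) with hB'
  set Ai : E →L[ℝ] E := ((A⁻¹ : _ˣ) : E →L[ℝ] E) with hAi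
  set Bi : E →L[ℝ] E := ((B⁻¹ : _ˣ) : E →L[ℝ] E) with hBi
  have hx0 : x ≠ 0 := by intro h; rw [h, norm_zero] at hx; norm_num at hx
  have hAiA : ∀ y, Ai (A' y) = y := by
    intro y
    have h : Ai * A' = 1 := A.inv_mul
    calc Ai (A' y) = (Ai * A') y := rfl
      _ = y := by rw [h]; rfl
  have hBiB : ∀ y, Bi (B' y) = y := by
    intro y
    have h : Bi * B' = 1 := B.inv_mul
    calc Bi (B' y) = (Bi * B') y := rfl
      _ = y := by rw [h]; rfl
  have hAx : A' x ≠ 0 := by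
    intro h; have := hAiA x; rw [h, map_zero] at this; exact hx0 this.symm
  have hBx : B' x ≠ 0 := by
    intro h; have := hBiB x; rw [h, map_zero] at this; exact hx0 this.symm
  have hAx' : (0:ℝ) < ‖A' x‖ := norm_pos_iff.mpr hAx
  have hAinv : 1 ≤ ‖Ai‖ * ‖A' x‖ := by
    calc (1:ℝ) = ‖x‖ := hx.symm
      _ = ‖Ai (A' x)‖ := by rw [hAiA]
      _ ≤ ‖Ai‖ * ‖A' x‖ := Ai.le_opNorm _
  have hBinv : 1 ≤ ‖B'‖ * ‖Bi‖ := by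
    have hid : B' * Bi = 1 := B.mul_inv
    calc (1:ℝ) = ‖(1 : E →L[ℝ] E)‖ := (norm_one).symm
      _ = ‖B' * Bi‖ := by rw [hid]
      _ ≤ ‖B'‖ * ‖Bi‖ := norm_mul_le _ _
  have key := aux_normalize_sub hAx hBx
  have hdiff : ‖A' x - B' x‖ ≤ ‖A' - B'‖ := by
    calc ‖A' x - B' x‖ = ‖(A' - B') x‖ := by rw [ContinuousLinearMap.sub_apply]
      _ ≤ ‖A' - B'‖ * ‖x‖ := (A' - B').le_opNorm x
      _ = ‖A' - B'‖ := by rw [hx, mul_one]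
  have step : 2 * ‖A' x - B' x‖ / ‖A' x‖ ≤ ‖Ai‖ * (1 + ‖B'‖ * ‖Bi‖) * ‖A' - B'‖ := by
    have h2 : 2 * ‖A' x - B' x‖ / ‖A' x‖ ≤ 2 * ‖Ai‖ * ‖A' - B'‖ := by
      rw [div_le_iff₀ hAx']
      calc 2 * ‖A' x - B' x‖ ≤ 2 * ‖A' - B'‖ := by gcongr
        _ = 2 * ‖A' - B'‖ * 1 := by ring
        _ ≤ 2 * ‖A' - B'‖ * (‖Ai‖ * ‖A' x‖) := by gcongr
        _ = 2 * ‖Ai‖ * ‖A' - B'‖ * ‖A' x‖ := by ring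
    calc 2 * ‖A' x - B' x‖ / ‖A' x‖ ≤ 2 * ‖Ai‖ * ‖A' - B'‖ := h2
      _ = ‖Ai‖ * (1 + 1) * ‖A' - B'‖ := by ring
      _ ≤ ‖Ai‖ * (1 + ‖B'‖ * ‖Bi‖) * ‖A' - B'‖ := by gcongr
  exact le_trans key step

/-- For invertible `A, B ∈ GL_{d+1}(ℝ)` (realized as units of the ring of
continuous linear endomorphisms of Euclidean space) and a unit vector `x`,
`‖Ax/‖Ax‖ - Bx/‖Bx‖‖ ≤ ‖A⁻¹‖ (1 + ‖B‖‖B⁻¹‖) ‖A - B‖`. -/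
theorem norm_normalized_action_sub_le
    (d : ℕ)
    (A B : (EuclideanSpace ℝ (Fin (d + 1)) →L[ℝ] EuclideanSpace ℝ (Fin (d + 1)))ˣ)
    (x : EuclideanSpace ℝ (Fin (d + 1))) (hx : ‖x‖ = 1) :
    ‖(‖(A : EuclideanSpace ℝ (Fin (d + 1)) →L[ℝ] EuclideanSpace ℝ (Fin (d + 1))) x‖⁻¹ •
        (A : EuclideanSpace ℝ (Fin (d + 1)) →L[ℝ] EuclideanSpace ℝ (Fin (d + 1))) x) -
      (‖(B : EuclideanSpace ℝ (Fin (d + 1)) →L[ℝ] EuclideanSpace ℝ (Fin (d + 1))) x‖⁻¹ •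
        (B : EuclideanSpace ℝ (Fin (d + 1)) →L[ℝ] EuclideanSpace ℝ (Fin (d + 1))) x)‖ ≤
      ‖((A⁻¹ : _ˣ) : EuclideanSpace ℝ (Fin (d + 1)) →L[ℝ] EuclideanSpace ℝ (Fin (d + 1)))‖ *
        (1 + ‖(B : EuclideanSpace ℝ (Fin (d + 1)) →L[ℝ] EuclideanSpace ℝ (Fin (d + 1)))‖ *
          ‖((B⁻¹ : _ˣ) : EuclideanSpace ℝ (Fin (d + 1)) →L[ℝ] EuclideanSpace ℝ (Fin (d + 1)))‖) *
        ‖(A : EuclideanSpace ℝ (Fin (d + 1)) →L[ℝ] EuclideanSpace ℝ (Fin (d + 1))) -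
          (B : EuclideanSpace ℝ (Fin (d + 1)) →L[ℝ] EuclideanSpace ℝ (Fin (d + 1)))‖ :=
  aux_main A B x hx
end

section
/- Let $\Lambda$ be a finite alphabet, and for each $i \in \Lambda$ let $A_i \in GL_{d+1}(\mathbb{R})$. Set $C_1 = \max_i \max\{1, \|A_i\|\}$ and $C_2 = \max_i \max\{1, \|A_i^{-1}\|\}$. Suppose there exist $c \in (0,1)$ and a unit vector $x \in \mathbb{R}^{d+1}$ such that for all $n$ and all words $\mathbf{u}, \mathbf{v} \in \Lambda^n$ with $u_1 \neq v_1$, $\left\| \frac{A_{\mathbf{u}} x}{\|A_{\mathbf{u}} x\|} - \frac{A_{\mathbf{v}} x}{\|A_{\mathbf{v}} x\|} \right\| \geq c^n$. Then for all $n$ and all distinct words $\mathbf{i}, \mathbf{j} \in \Lambda^n$, $\|A_{\mathbf{i}} - A_{\mathbf{j}}\| \geq (2^{-1} C_1^{-1} C_2^{-3} c)^n$; in particular the family $\{A_i\}$ is strongly Diophantine. -/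
def wordProd {Λ M : Type*} [Monoid M] (A : Λ → M) (l : List Λ) : M :=
  (l.map A).prod

lemma wordProd_append {Λ M : Type*} [Monoid M] (A : Λ → M) (l₁ l₂ : List Λ) :
    wordProd A (l₁ ++ l₂) = wordProd A l₁ * wordProd A l₂ := by
  simp [wordProd]

lemma wordProd_cons {Λ M : Type*} [Monoid M] (A : Λ → M) (a : Λ) (l : List Λ) :
    wordProd A (a :: l) = A a * wordProd A l := by
  simp [wordProd]

section Aux
variable {Λ : Type*} {E : Type*} [NormedAddCommGroup E] [NormedSpace ℝ E]

lemma norm_wordProd_le (A : Λ → (E →L[ℝ] E)ˣ) (C : ℝ) (hC : 1 ≤ C)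
    (h : ∀ i, ‖((A i : _ˣ) : E →L[ℝ] E)‖ ≤ C) (l : List Λ) :
    ‖((wordProd A l : _ˣ) : E →L[ℝ] E)‖ ≤ C ^ l.length := by
  induction l with
  | nil =>
    simp only [wordProd, List.map_nil, List.prod_nil, List.length_nil, pow_zero, Units.val_one]
    rw [ContinuousLinearMap.one_def]; exact ContinuousLinearMap.norm_id_le
  | cons a l ih =>
    rw [wordProd_cons, Units.val_mul, List.length_cons, pow_succ']
    exact le_trans (norm_mul_le _ _)
      (mul_le_mul (h a) ih (norm_nonneg _) (le_trans zero_le_one hC))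

lemma norm_wordProd_inv_le (A : Λ → (E →L[ℝ] E)ˣ) (C : ℝ) (hC : 1 ≤ C)
    (h : ∀ i, ‖(((A i)⁻¹ : _ˣ) : E →L[ℝ] E)‖ ≤ C) (l : List Λ) :
    ‖(((wordProd A l)⁻¹ : _ˣ) : E →L[ℝ] E)‖ ≤ C ^ l.length := by
  induction l with
  | nil =>
    simp only [wordProd, List.map_nil, List.prod_nil, List.length_nil, pow_zero, inv_one,
      Units.val_one]
    rw [ContinuousLinearMap.one_def]; exact ContinuousLinearMap.norm_id_le
  | cons a l ih =>
    rw [wordProd_cons, mul_inv_rev, Units.val_mul, List.length_cons, pow_succ]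
    exact le_trans (norm_mul_le _ _)
      (mul_le_mul ih (h a) (norm_nonneg _) (pow_nonneg (le_trans zero_le_one hC) _))

/-- Longest common prefix splitting for distinct lists of equal length. -/
lemma exists_common_prefix_split : ∀ (i j : List Λ), i.length = j.length → i ≠ j →
    ∃ w u v : List Λ, i = w ++ u ∧ j = w ++ v ∧ u.length = v.length ∧
      u.head? ≠ v.head? ∧ u ≠ [] := by
  intro i
  induction i with
  | nil =>
    intro j h hne
    cases j with
    | nil => exact absurd rfl hne
    | cons b j => simp at h
  | cons a i ih =>
    intro j h hne
    cases j with
    | nil => simp at h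
    | cons b j =>
      by_cases hab : a = b
      · subst hab
        have hne' : i ≠ j := fun h' => hne (by rw [h'])
        obtain ⟨w, u, v, h1, h2, h3, h4, h5⟩ := ih j (by simpa using h) hne'
        exact ⟨a :: w, u, v, by simp [h1], by simp [h2], h3, h4, h5⟩
      · exact ⟨[], a :: i, b :: j, rfl, rfl, by simpa using h, by simp [hab], by simp⟩

/-- The projective distance at a unit vector is controlled by the operator-norm distance. -/
lemma proj_sep_bound (U V : (E →L[ℝ] E)ˣ) (x : E) (hx : ‖x‖ = 1) :
    ‖(‖(U : E →L[ℝ] E) x‖⁻¹ • (U : E →L[ℝ] E) x) -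
      (‖(V : E →L[ℝ] E) x‖⁻¹ • (V : E →L[ℝ] E) x)‖ ≤
      2 * ‖((U⁻¹ : _ˣ) : E →L[ℝ] E)‖ * ‖(U : E →L[ℝ] E) - (V : E →L[ℝ] E)‖ := by
  set a := (U : E →L[ℝ] E) x with ha_def
  set b := (V : E →L[ℝ] E) x with hb_def
  have hUa : ((U⁻¹ : _ˣ) : E →L[ℝ] E) a = x := by
    rw [ha_def, ← ContinuousLinearMap.mul_apply, ← Units.val_mul, inv_mul_cancel U,
      Units.val_one, ContinuousLinearMap.one_apply]
  have hVb : ((V⁻¹ : _ˣ) : E →L[ℝ] E) b = x := by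
    rw [hb_def, ← ContinuousLinearMap.mul_apply, ← Units.val_mul, inv_mul_cancel V,
      Units.val_one, ContinuousLinearMap.one_apply]
  have hxne : x ≠ 0 := by intro h0; rw [h0, norm_zero] at hx; norm_num at hx
  have ha_pos : 0 < ‖a‖ := by
    rw [norm_pos_iff]
    intro h0; rw [h0, map_zero] at hUa; exact hxne hUa.symm
  have hb_pos : 0 < ‖b‖ := by
    rw [norm_pos_iff]
    intro h0; rw [h0, map_zero] at hVb; exact hxne hVb.symm
  have hainv : ‖a‖⁻¹ ≤ ‖((U⁻¹ : _ˣ) : E →L[ℝ] E)‖ := by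
    have h := ((U⁻¹ : _ˣ) : E →L[ℝ] E).le_opNorm a
    rw [hUa, hx] at h
    have h2 : ‖a‖ * ‖a‖⁻¹ = 1 := mul_inv_cancel₀ (ne_of_gt ha_pos)
    nlinarith [inv_nonneg.mpr (le_of_lt ha_pos)]
  have hab : ‖a - b‖ ≤ ‖(U : E →L[ℝ] E) - (V : E →L[ℝ] E)‖ := by
    have h : a - b = ((U : E →L[ℝ] E) - (V : E →L[ℝ] E)) x := by
      rw [ContinuousLinearMap.sub_apply]
    rw [h]
    calc ‖((U : E →L[ℝ] E) - (V : E →L[ℝ] E)) x‖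
        ≤ ‖(U : E →L[ℝ] E) - (V : E →L[ℝ] E)‖ * ‖x‖ := ContinuousLinearMap.le_opNorm _ _
      _ = ‖(U : E →L[ℝ] E) - (V : E →L[ℝ] E)‖ := by rw [hx, mul_one]
  have hdecomp : ‖a‖⁻¹ • a - ‖b‖⁻¹ • b = ‖a‖⁻¹ • (a - b) + (‖a‖⁻¹ - ‖b‖⁻¹) • b := by
    module
  have h1 : ‖‖a‖⁻¹ • (a - b)‖ = ‖a‖⁻¹ * ‖a - b‖ := by
    rw [norm_smul, Real.norm_eq_abs, abs_of_nonneg (inv_nonneg.mpr (le_of_lt ha_pos))]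
  have h2 : ‖(‖a‖⁻¹ - ‖b‖⁻¹) • b‖ ≤ ‖a‖⁻¹ * ‖a - b‖ := by
    rw [norm_smul, Real.norm_eq_abs]
    have key : (‖a‖⁻¹ - ‖b‖⁻¹) * ‖b‖ = (‖b‖ - ‖a‖) * ‖a‖⁻¹ := by
      field_simp
    calc |‖a‖⁻¹ - ‖b‖⁻¹| * ‖b‖ = |(‖a‖⁻¹ - ‖b‖⁻¹) * ‖b‖| := by
          rw [abs_mul, abs_of_nonneg (norm_nonneg b)]
      _ = |‖b‖ - ‖a‖| * ‖a‖⁻¹ := by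
          rw [key, abs_mul, abs_of_nonneg (inv_nonneg.mpr (le_of_lt ha_pos))]
      _ ≤ ‖b - a‖ * ‖a‖⁻¹ := by
          gcongr
          exact abs_norm_sub_norm_le b a
      _ = ‖a‖⁻¹ * ‖a - b‖ := by rw [norm_sub_rev]; ring
  calc ‖‖a‖⁻¹ • a - ‖b‖⁻¹ • b‖
      ≤ ‖‖a‖⁻¹ • (a - b)‖ + ‖(‖a‖⁻¹ - ‖b‖⁻¹) • b‖ := by rw [hdecomp]; exact norm_add_le _ _
    _ ≤ ‖a‖⁻¹ * ‖a - b‖ + ‖a‖⁻¹ * ‖a - b‖ := by rw [h1]; exact add_le_add_right h2 _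
    _ = 2 * ‖a‖⁻¹ * ‖a - b‖ := by ring
    _ ≤ 2 * ‖((U⁻¹ : _ˣ) : E →L[ℝ] E)‖ * ‖(U : E →L[ℝ] E) - (V : E →L[ℝ] E)‖ := by
        have h3 : 2 * ‖a‖⁻¹ ≤ 2 * ‖((U⁻¹ : _ˣ) : E →L[ℝ] E)‖ := by linarith
        exact mul_le_mul h3 hab (norm_nonneg _) (by positivity)

end Aux

/-- If the projective (normalized) action of the semigroup generated by a finite
family of invertible matrices satisfies exponential separation at some unit
vector `x` for words with distinct first letters, then the family is strongly
Diophantine with the explicit constant `2⁻¹ C₁⁻¹ C₂⁻³ c`. -/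
theorem strongly_diophantine_of_exponential_separation
    (d : ℕ) {Λ : Type*} [Fintype Λ] [Nonempty Λ]
    (A : Λ → (EuclideanSpace ℝ (Fin (d + 1)) →L[ℝ] EuclideanSpace ℝ (Fin (d + 1)))ˣ)
    (C₁ C₂ : ℝ)
    (hC₁ : C₁ = Finset.univ.sup' Finset.univ_nonempty (fun i => max 1
      ‖(A i : EuclideanSpace ℝ (Fin (d + 1)) →L[ℝ] EuclideanSpace ℝ (Fin (d + 1)))‖))
    (hC₂ : C₂ = Finset.univ.sup' Finset.univ_nonempty (fun i => max 1
      ‖(((A i)⁻¹ : _ˣ) : EuclideanSpace ℝ (Fin (d + 1)) →L[ℝ] EuclideanSpace ℝ (Fin (d + 1)))‖))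
    (c : ℝ) (hc : c ∈ Set.Ioo (0 : ℝ) 1)
    (x : EuclideanSpace ℝ (Fin (d + 1))) (hx : ‖x‖ = 1)
    (hsep : ∀ n : ℕ, ∀ u v : List Λ, u.length = n → v.length = n →
      u.head? ≠ v.head? →
      c ^ n ≤ ‖(‖(wordProd A u : _ˣ).val x‖⁻¹ • (wordProd A u : _ˣ).val x) -
        (‖(wordProd A v : _ˣ).val x‖⁻¹ • (wordProd A v : _ˣ).val x)‖) :
    ∀ n : ℕ, ∀ i j : List Λ, i.length = n → j.length = n → i ≠ j →
      (2⁻¹ * C₁⁻¹ * C₂⁻¹ ^ 3 * c) ^ n ≤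
        ‖(wordProd A i : _ˣ).val - (wordProd A j : _ˣ).val‖ := by
  obtain ⟨hc0, hc1⟩ := hc
  have hC₂1 : 1 ≤ C₂ := by
    rw [hC₂]
    have h := Finset.le_sup' (fun i => max 1
      ‖(((A i)⁻¹ : _ˣ) : EuclideanSpace ℝ (Fin (d + 1)) →L[ℝ] EuclideanSpace ℝ (Fin (d + 1)))‖)
      (Finset.mem_univ (Classical.arbitrary Λ))
    exact le_trans (le_max_left _ _) h
  have hC₁1 : 1 ≤ C₁ := by
    rw [hC₁]
    have h := Finset.le_sup' (fun i => max 1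
      ‖((A i : _ˣ) : EuclideanSpace ℝ (Fin (d + 1)) →L[ℝ] EuclideanSpace ℝ (Fin (d + 1)))‖)
      (Finset.mem_univ (Classical.arbitrary Λ))
    exact le_trans (le_max_left _ _) h
  have hC₂i : ∀ i, ‖(((A i)⁻¹ : _ˣ) :
      EuclideanSpace ℝ (Fin (d + 1)) →L[ℝ] EuclideanSpace ℝ (Fin (d + 1)))‖ ≤ C₂ := fun i => by
    rw [hC₂]
    have h := Finset.le_sup' (fun i => max 1
      ‖(((A i)⁻¹ : _ˣ) : EuclideanSpace ℝ (Fin (d + 1)) →L[ℝ] EuclideanSpace ℝ (Fin (d + 1)))‖)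
      (Finset.mem_univ i)
    exact le_trans (le_max_right _ _) h
  have hC₁0 : (0:ℝ) < C₁ := lt_of_lt_of_le one_pos hC₁1
  have hC₂0 : (0:ℝ) < C₂ := lt_of_lt_of_le one_pos hC₂1
  intro n i j hi hj hne
  obtain ⟨w, u, v, hiw, hjw, huv, hhead, hune⟩ :=
    exists_common_prefix_split i j (by rw [hi, hj]) hne
  have hm1 : 1 ≤ u.length := List.length_pos_iff.mpr hune
  have hn : n = w.length + u.length := by rw [← hi, hiw, List.length_append]
  have hinvu := norm_wordProd_inv_le A C₂ hC₂1 hC₂i u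
  have hinvw := norm_wordProd_inv_le A C₂ hC₂1 hC₂i w
  -- step 1: separation transfers from projective to operator-norm distance
  have hstep1 : c ^ u.length ≤ 2 * C₂ ^ u.length *
      ‖(wordProd A u : _ˣ).val - (wordProd A v : _ˣ).val‖ := by
    have hs := hsep u.length u v rfl huv.symm hhead
    have hp := proj_sep_bound (wordProd A u) (wordProd A v) x hx
    refine le_trans hs (le_trans hp ?_)
    gcongr
  -- step 2: remove the common prefix
  have hstep2 : ‖(wordProd A u : _ˣ).val - (wordProd A v : _ˣ).val‖ ≤
      C₂ ^ w.length * ‖(wordProd A i : _ˣ).val - (wordProd A j : _ˣ).val‖ := by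
    have hfac : ((wordProd A w)⁻¹ : _ˣ).val *
        ((wordProd A i : _ˣ).val - (wordProd A j : _ˣ).val) =
        (wordProd A u : _ˣ).val - (wordProd A v : _ˣ).val := by
      rw [hiw, hjw, wordProd_append, wordProd_append, mul_sub, ← Units.val_mul,
        ← Units.val_mul, inv_mul_cancel_left, inv_mul_cancel_left]
    calc ‖(wordProd A u : _ˣ).val - (wordProd A v : _ˣ).val‖
        = ‖((wordProd A w)⁻¹ : _ˣ).val *
            ((wordProd A i : _ˣ).val - (wordProd A j : _ˣ).val)‖ := by rw [hfac]
      _ ≤ ‖((wordProd A w)⁻¹ : _ˣ).val‖ *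
            ‖(wordProd A i : _ˣ).val - (wordProd A j : _ˣ).val‖ := norm_mul_le _ _
      _ ≤ C₂ ^ w.length * ‖(wordProd A i : _ˣ).val - (wordProd A j : _ˣ).val‖ := by
          gcongr
  have hD0 : 0 ≤ ‖(wordProd A i : _ˣ).val - (wordProd A j : _ˣ).val‖ := norm_nonneg _
  have hfinal : c ^ u.length ≤ 2 * C₂ ^ n *
      ‖(wordProd A i : _ˣ).val - (wordProd A j : _ˣ).val‖ := by
    calc c ^ u.length ≤ 2 * C₂ ^ u.length *
          ‖(wordProd A u : _ˣ).val - (wordProd A v : _ˣ).val‖ := hstep1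
      _ ≤ 2 * C₂ ^ u.length * (C₂ ^ w.length *
          ‖(wordProd A i : _ˣ).val - (wordProd A j : _ˣ).val‖) := by
          gcongr
      _ = 2 * C₂ ^ n * ‖(wordProd A i : _ˣ).val - (wordProd A j : _ˣ).val‖ := by
          rw [hn, pow_add]; ring
  -- arithmetic conclusion
  have hC₁inv : C₁⁻¹ ≤ 1 := inv_le_one_of_one_le₀ hC₁1
  have hC₂inv : C₂⁻¹ ≤ 1 := inv_le_one_of_one_le₀ hC₂1
  have hC₁inv0 : (0:ℝ) < C₁⁻¹ := inv_pos.mpr hC₁0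
  have hC₂inv0 : (0:ℝ) < C₂⁻¹ := inv_pos.mpr hC₂0
  have hρ0 : (0:ℝ) ≤ 2⁻¹ * C₁⁻¹ * C₂⁻¹ ^ 3 * c := by positivity
  have hsq : C₂⁻¹ ^ 2 ≤ 1 := pow_le_one₀ (le_of_lt hC₂inv0) hC₂inv
  have step1 : 2⁻¹ * C₁⁻¹ * C₂⁻¹ ^ 3 * c ≤ C₂⁻¹ := by
    have h1 : (2:ℝ)⁻¹ * C₁⁻¹ ≤ 1 := mul_le_one₀ (by norm_num) (le_of_lt hC₁inv0) hC₁inv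
    have h2 : (2:ℝ)⁻¹ * C₁⁻¹ * C₂⁻¹ ^ 2 ≤ 1 := mul_le_one₀ h1 (by positivity) hsq
    have h3 : (2:ℝ)⁻¹ * C₁⁻¹ * C₂⁻¹ ^ 2 * c ≤ 1 := mul_le_one₀ h2 (le_of_lt hc0) (le_of_lt hc1)
    calc 2⁻¹ * C₁⁻¹ * C₂⁻¹ ^ 3 * c = (2⁻¹ * C₁⁻¹ * C₂⁻¹ ^ 2 * c) * C₂⁻¹ := by ring
      _ ≤ 1 * C₂⁻¹ := mul_le_mul_of_nonneg_right h3 (le_of_lt hC₂inv0)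
      _ = C₂⁻¹ := one_mul _
  have step2 : 2⁻¹ * C₁⁻¹ * C₂⁻¹ ^ 3 * c ≤ 2⁻¹ * C₂⁻¹ * c := by
    have hq : C₁⁻¹ * C₂⁻¹ ^ 2 ≤ 1 := mul_le_one₀ hC₁inv (by positivity) hsq
    calc 2⁻¹ * C₁⁻¹ * C₂⁻¹ ^ 3 * c = (C₁⁻¹ * C₂⁻¹ ^ 2) * (2⁻¹ * C₂⁻¹ * c) := by ring
      _ ≤ 1 * (2⁻¹ * C₂⁻¹ * c) := mul_le_mul_of_nonneg_right hq (by positivity)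
      _ = 2⁻¹ * C₂⁻¹ * c := one_mul _
  calc (2⁻¹ * C₁⁻¹ * C₂⁻¹ ^ 3 * c) ^ n
      = (2⁻¹ * C₁⁻¹ * C₂⁻¹ ^ 3 * c) ^ w.length * (2⁻¹ * C₁⁻¹ * C₂⁻¹ ^ 3 * c) ^ u.length := by
        rw [hn, pow_add]
    _ ≤ (C₂⁻¹) ^ w.length * (2⁻¹ * C₂⁻¹ * c) ^ u.length :=
        mul_le_mul (pow_le_pow_left₀ hρ0 step1 _) (pow_le_pow_left₀ hρ0 step2 _)
          (pow_nonneg hρ0 _) (pow_nonneg (le_of_lt hC₂inv0) _)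
    _ = (2⁻¹ : ℝ) ^ u.length * (C₂⁻¹ ^ w.length * C₂⁻¹ ^ u.length * c ^ u.length) := by
        rw [mul_pow, mul_pow]; ring
    _ ≤ 2⁻¹ * (C₂⁻¹ ^ w.length * C₂⁻¹ ^ u.length * c ^ u.length) :=
        mul_le_mul_of_nonneg_right
          (pow_le_of_le_one (by norm_num) (by norm_num) (Nat.one_le_iff_ne_zero.mp hm1))
          (by positivity)
    _ = 2⁻¹ * C₂⁻¹ ^ n * c ^ u.length := by rw [hn, pow_add]; ring
    _ ≤ 2⁻¹ * C₂⁻¹ ^ n * (2 * C₂ ^ n *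
        ‖(wordProd A i : _ˣ).val - (wordProd A j : _ˣ).val‖) := by gcongr
    _ = (C₂⁻¹ ^ n * C₂ ^ n) * ‖(wordProd A i : _ˣ).val - (wordProd A j : _ˣ).val‖ := by ring
    _ = ‖(wordProd A i : _ˣ).val - (wordProd A j : _ˣ).val‖ := by
        rw [← mul_pow, inv_mul_cancel₀ (ne_of_gt hC₂0), one_pow, one_mul]
end
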